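/- Let N ∈ ℕ, let f₁,…,f_N : [0,1] → [0,1] and g₁,…,g_N : [0,1] → ℝ be Lebesgue measurable functions satisfying hypotheses (H₁), (H₂) with constant K, and (H₃), let L be the largest m ∈ {1,…,N} such that some intersection f_{n₁}([0,1]) ∩ ⋯ ∩ f_{n_m}([0,1]) with n₁ < ⋯ < n_m has positive Lebesgue measure, and suppose there exists a real constant C < 1 with |g_n(x)| ≤ (C/(KL)) |f_n'(x)| for all n ∈ {1,…,N} and almost all x ∈ [0,1]. Let P : L¹([0,1]) → L¹([0,1]) be given by Ph = Σ_{n=1}^N g_n·(h∘f_n) and let g ∈ L¹([0,1]). Then the series Σ_{k=0}^∞ P^k g converges in L¹([0,1]), its sum φ₀ is the unique solution in L¹([0,1]) of the equation φ = Pφ + g, and moreover ‖φ₀ − Σ_{k=0}^m P^k g‖ ≤ C^{m+1}/(1−C) · ‖g‖ for every m ∈ ℕ. -/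

import Mathlib

open MeasureTheory Filter Set Topology
open scoped Classical

open scoped ENNReal NNReal

noncomputable abbrev μ01 : MeasureTheory.Measure ℝ := MeasureTheory.volume.restrict (Set.Icc 0 1)

/-- `x` is a Lebesgue density point of the set `S ⊆ ℝ`. -/
def DensityPt (S : Set ℝ) (x : ℝ) : Prop :=
  Tendsto (fun r : ℝ =>
      MeasureTheory.volume (S ∩ Metric.closedBall x r) / MeasureTheory.volume (Metric.closedBall x r))
    (𝓝[>] 0) (𝓝 1)

/-- `h` has the linear map `t ↦ a * t` as approximate differential at `x₀` (relative to `E`). -/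
def HasApproxDerivAt (E : Set ℝ) (h : ℝ → ℝ) (a : ℝ) (x₀ : ℝ) : Prop :=
  ∀ ε > 0, DensityPt {x | x ∈ E ∧ x ≠ x₀ ∧ |h x - h x₀ - a * (x - x₀)| / |x - x₀| < ε} x₀

noncomputable def approxDeriv (E : Set ℝ) (h : ℝ → ℝ) (x : ℝ) : ℝ :=
  if hd : ∃ a, HasApproxDerivAt E h a x then hd.choose else 0

lemma approxDeriv_spec {E : Set ℝ} {h : ℝ → ℝ} {x : ℝ} (hd : ∃ a, HasApproxDerivAt E h a x) :
    HasApproxDerivAt E h (approxDeriv E h x) x := by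
  rw [approxDeriv, dif_pos hd]; exact hd.choose_spec

lemma DensityPt.eventually_le {S : Set ℝ} {x : ℝ} (h : DensityPt S x) {c : ℝ≥0∞} (hc : c < 1) :
    ∀ᶠ r in 𝓝[>] (0:ℝ),
      c * volume (Metric.closedBall x r) ≤ volume (S ∩ Metric.closedBall x r) := by
  filter_upwards [h.eventually_const_lt hc] with r hr
  calc c * volume (Metric.closedBall x r)
      ≤ (volume (S ∩ Metric.closedBall x r) / volume (Metric.closedBall x r))
        * volume (Metric.closedBall x r) := by
        exact mul_le_mul_left hr.le _
    _ ≤ volume (S ∩ Metric.closedBall x r) := by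
        rw [mul_comm]; exact ENNReal.mul_div_le

lemma nonempty_of_measure_lt {A B U : Set ℝ} (hA : MeasurableSet A) (hU : A ∪ B ⊆ U)
    (h : volume U < volume A + volume B) : (A ∩ B).Nonempty := by
  rw [Set.nonempty_iff_ne_empty]
  intro hemp
  have h1 : volume (B ∪ A) + volume (B ∩ A) = volume B + volume A :=
    measure_union_add_inter B hA
  have h2 : B ∩ A = ∅ := by rwa [Set.inter_comm B A]
  rw [h2, measure_empty, add_zero] at h1
  have : volume (B ∪ A) ≤ volume U := measure_mono (by rw [Set.union_comm]; exact hU)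
  rw [h1] at this
  rw [add_comm] at h
  exact absurd this (not_le.mpr h)

lemma DensityPt.inter_ball {A : Set ℝ} {x : ℝ} (h : DensityPt A x) {δ : ℝ} (hδ : 0 < δ) :
    DensityPt (A ∩ Metric.ball x δ) x := by
  apply h.congr'
  filter_upwards [Ioo_mem_nhdsGT hδ] with r hr
  have : A ∩ Metric.ball x δ ∩ Metric.closedBall x r = A ∩ Metric.closedBall x r := by
    ext y; simp only [Set.mem_inter_iff, Metric.mem_ball, Metric.mem_closedBall, and_assoc]
    constructor
    · rintro ⟨h1, _, h3⟩; exact ⟨h1, h3⟩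
    · rintro ⟨h1, h3⟩; exact ⟨h1, lt_of_le_of_lt h3 hr.2, h3⟩
  rw [this]

lemma DensityPt.nonempty_inter {S T : Set ℝ} {x : ℝ} (hS : DensityPt S x) (hT : DensityPt T x)
    (hSm : MeasurableSet S) :
    ∀ᶠ r in 𝓝[>] (0:ℝ), (S ∩ T ∩ Metric.closedBall x r).Nonempty := by
  have hc : (ENNReal.ofReal (7/8) : ℝ≥0∞) < 1 := by
    rw [← ENNReal.ofReal_one, ENNReal.ofReal_lt_ofReal_iff one_pos]; norm_num
  filter_upwards [hS.eventually_le hc, hT.eventually_le hc, self_mem_nhdsWithin]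
    with r h1 h2 hr
  rw [Set.mem_Ioi] at hr
  have hvol : volume (Metric.closedBall x r) = ENNReal.ofReal (2 * r) := by
    rw [Real.volume_closedBall]
  have hX0 : ENNReal.ofReal (2 * r) ≠ 0 := by
    simp [ENNReal.ofReal_eq_zero]; linarith
  have hXt : ENNReal.ofReal (2 * r) ≠ ⊤ := ENNReal.ofReal_ne_top
  have key : volume (Metric.closedBall x r)
      < volume (S ∩ Metric.closedBall x r) + volume (T ∩ Metric.closedBall x r) := by
    calc volume (Metric.closedBall x r) = 1 * ENNReal.ofReal (2*r) := by rw [hvol, one_mul]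
      _ < (ENNReal.ofReal (7/8) + ENNReal.ofReal (7/8)) * ENNReal.ofReal (2*r) := by
          rw [mul_comm _ (ENNReal.ofReal (2*r)), mul_comm _ (ENNReal.ofReal (2*r))]
          apply ENNReal.mul_lt_mul_right hX0 hXt
          rw [← ENNReal.ofReal_add (by norm_num) (by norm_num), ← ENNReal.ofReal_one,
            ENNReal.ofReal_lt_ofReal_iff (by norm_num)]
          norm_num
      _ = ENNReal.ofReal (7/8) * ENNReal.ofReal (2*r) + ENNReal.ofReal (7/8) * ENNReal.ofReal (2*r) := by
          ring
      _ ≤ volume (S ∩ Metric.closedBall x r) + volume (T ∩ Metric.closedBall x r) := by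
          rw [← hvol]; exact add_le_add h1 h2
  have := nonempty_of_measure_lt (hSm.inter measurableSet_closedBall)
    (U := Metric.closedBall x r) (by intro y hy; rcases hy with h|h; exacts [h.2, h.2]) key
  obtain ⟨y, ⟨hyS, hyB⟩, hyT, hyB'⟩ := this
  exact ⟨y, ⟨hyS, hyT⟩, hyB⟩

lemma approx_eq_deriv {f F : ℝ → ℝ} (hfm : Measurable f) {x a b : ℝ}
    (ha : HasApproxDerivAt (Set.Icc 0 1) f a x) (hF : HasDerivAt F b x)
    {A : Set ℝ} (hAm : MeasurableSet A) (hAd : DensityPt A x)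
    (hfF : ∀ y ∈ A, f y = F y) (hxA : x ∈ A) : a = b := by
  by_contra hne
  have habpos : 0 < |a - b| := abs_pos.mpr (sub_ne_zero.mpr hne)
  set ε := |a - b| / 4 with hεdef
  have hεpos : 0 < ε := by positivity
  set S := {y | y ∈ Set.Icc (0:ℝ) 1 ∧ y ≠ x ∧ |f y - f x - a * (y - x)| / |y - x| < ε} with hSdef
  have hSd : DensityPt S x := ha ε hεpos
  have hSm : MeasurableSet S := by
    apply MeasurableSet.inter measurableSet_Icc
    apply MeasurableSet.inter (MeasurableSet.compl (measurableSet_singleton x))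
    exact measurableSet_lt
      (Measurable.div ((hfm.sub measurable_const).sub
        (measurable_const.mul (measurable_id.sub measurable_const))).abs
        (measurable_id.sub measurable_const).abs) measurable_const
  -- from differentiability of F at x
  have hlo := (hasDerivAt_iff_isLittleO.mp hF).def hεpos
  rw [Metric.eventually_nhds_iff] at hlo
  obtain ⟨δ, hδpos, hδ⟩ := hlo
  have hA'd : DensityPt (A ∩ Metric.ball x δ) x := hAd.inter_ball hδpos
  have hev := hSd.nonempty_inter hA'd hSm
  obtain ⟨r, hne'⟩ := hev.exists
  obtain ⟨y, ⟨hyS, hyA, hyb⟩, _⟩ := hne'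
  obtain ⟨hyI, hyx, hylt⟩ := hyS
  have hyxpos : 0 < |y - x| := abs_pos.mpr (sub_ne_zero.mpr hyx)
  have h1 : |f y - f x - a * (y - x)| < ε * |y - x| := by
    rw [div_lt_iff₀ hyxpos] at hylt; linarith [hylt]
  have h2 : |F y - F x - (y - x) * b| ≤ ε * |y - x| := by
    have := hδ (Metric.mem_ball.mp hyb)
    simpa [Real.norm_eq_abs, smul_eq_mul] using this
  have h3 : f y = F y := hfF y hyA
  have h4 : f x = F x := hfF x hxA
  have key : |a - b| * |y - x| ≤ 2 * ε * |y - x| := by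
    have : (a - b) * (y - x) = (f y - f x - b * (y - x)) - (f y - f x - a * (y - x)) := by ring
    calc |a - b| * |y - x| = |(a - b) * (y - x)| := (abs_mul _ _).symm
      _ = |(f y - f x - b * (y - x)) - (f y - f x - a * (y - x))| := by rw [this]
      _ ≤ |f y - f x - b * (y - x)| + |f y - f x - a * (y - x)| := abs_sub _ _
      _ ≤ ε * |y - x| + ε * |y - x| := by
          apply add_le_add _ h1.le
          rw [h3, h4]
          calc |F y - F x - b * (y - x)| = |F y - F x - (y - x) * b| := by ring_nf
            _ ≤ ε * |y - x| := h2
      _ = 2 * ε * |y - x| := by ring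
  have : |a - b| ≤ 2 * ε := le_of_mul_le_mul_right (by linarith [key]) hyxpos
  rw [hεdef] at this
  linarith

section Whitney
variable {f : ℝ → ℝ}

/-- The set of points near `x` where `f` has increments bounded by `M`. -/
private def Sslope (f : ℝ → ℝ) (x : ℝ) (M : ℕ) : Set ℝ :=
  {y | y ∈ Set.Icc (0:ℝ) 1 ∧ |f y - f x| ≤ M * |y - x|}

private lemma measSslope (hfm : Measurable f) (x : ℝ) (M : ℕ) :
    MeasurableSet (Sslope f x M) :=
  measurableSet_Icc.inter (measurableSet_le
    ((hfm.sub measurable_const).abs)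
    (measurable_const.mul (measurable_id.sub measurable_const).abs))

/-- Whitney-type decomposition: countably many measurable pieces on which `f` is Lipschitz,
covering all points of approximate differentiability. -/
lemma whitney (hfm : Measurable f) :
    ∃ T : ℕ → Set ℝ,
      (∀ i, MeasurableSet (T i)) ∧ (∀ i, T i ⊆ Set.Icc 0 1) ∧
      (∀ i, ∃ c : ℝ≥0, LipschitzOnWith c f (T i)) ∧
      ∀ x ∈ Set.Icc (0:ℝ) 1, (∃ a, HasApproxDerivAt (Set.Icc 0 1) f a x) → x ∈ ⋃ i, T i := by
  classical
  -- the density sets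
  set E : ℕ → ℕ → Set ℝ := fun M m =>
    {x | x ∈ Set.Icc (0:ℝ) 1 ∧ ∀ q : ℚ, 0 < (q:ℝ) → (q:ℝ) ≤ 1/(m+1) →
      ENNReal.ofReal (7/8) * volume (Metric.closedBall x (q:ℝ))
        ≤ volume (Sslope f x M ∩ Metric.closedBall x (q:ℝ))} with hEdef
  have hEmeas : ∀ M m, MeasurableSet (E M m) := by
    intro M m
    have hEeq : E M m = Set.Icc (0:ℝ) 1 ∩ ⋂ q : ℚ, {x : ℝ | 0 < (q:ℝ) → (q:ℝ) ≤ 1/(m+1) →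
        ENNReal.ofReal (7/8) * volume (Metric.closedBall x (q:ℝ))
          ≤ volume (Sslope f x M ∩ Metric.closedBall x (q:ℝ))} := by
      rw [hEdef]
      ext x
      simp only [Set.mem_setOf_eq, Set.mem_inter_iff, Set.mem_iInter]
    rw [hEeq]
    refine measurableSet_Icc.inter (MeasurableSet.iInter fun q => ?_)
    by_cases hq : 0 < (q:ℝ) ∧ (q:ℝ) ≤ 1/(m+1)
    · -- the real condition
      have hkey : Measurable (fun x : ℝ => volume (Sslope f x M ∩ Metric.closedBall x (q:ℝ))) := by
        have hG : MeasurableSet {p : ℝ × ℝ | p.2 ∈ Set.Icc (0:ℝ) 1 ∧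
            |f p.2 - f p.1| ≤ M * |p.2 - p.1| ∧ |p.2 - p.1| ≤ (q:ℝ)} := by
          apply MeasurableSet.inter
          · exact measurable_snd measurableSet_Icc
          apply MeasurableSet.inter
          · exact measurableSet_le ((hfm.comp measurable_snd).sub (hfm.comp measurable_fst)).abs
              (measurable_const.mul (measurable_snd.sub measurable_fst).abs)
          · exact measurableSet_le (measurable_snd.sub measurable_fst).abs measurable_const
        have h2 := measurable_measure_prodMk_left (ν := volume) hG
        have hseteq : (fun x : ℝ => volume (Sslope f x M ∩ Metric.closedBall x (q:ℝ)))
            = fun x : ℝ => volume (Prod.mk x ⁻¹' {p : ℝ × ℝ | p.2 ∈ Set.Icc (0:ℝ) 1 ∧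
              |f p.2 - f p.1| ≤ M * |p.2 - p.1| ∧ |p.2 - p.1| ≤ (q:ℝ)}) := by
          funext x
          congr 1
          ext y
          simp only [Sslope, Set.mem_inter_iff, Set.mem_setOf_eq, Metric.mem_closedBall,
            Set.mem_preimage, Real.dist_eq, and_assoc]
        rw [hseteq]
        exact h2
      have heq2 : {x : ℝ | 0 < (q:ℝ) → (q:ℝ) ≤ 1/(m+1) →
          ENNReal.ofReal (7/8) * volume (Metric.closedBall x (q:ℝ))
            ≤ volume (Sslope f x M ∩ Metric.closedBall x (q:ℝ))}
          = (fun x : ℝ => volume (Sslope f x M ∩ Metric.closedBall x (q:ℝ))) ⁻¹'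
            (Set.Ici (ENNReal.ofReal (7/8) * ENNReal.ofReal (2*(q:ℝ)))) := by
        ext x
        simp only [Set.mem_setOf_eq, Set.mem_preimage, Set.mem_Ici, Real.volume_closedBall]
        constructor
        · intro h; exact h hq.1 hq.2
        · intro h _ _; exact h
      rw [heq2]
      exact hkey measurableSet_Ici
    · have heq3 : {x : ℝ | 0 < (q:ℝ) → (q:ℝ) ≤ 1/(m+1) →
          ENNReal.ofReal (7/8) * volume (Metric.closedBall x (q:ℝ))
            ≤ volume (Sslope f x M ∩ Metric.closedBall x (q:ℝ))} = Set.univ := by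
        ext x; simp only [Set.mem_setOf_eq, Set.mem_univ, iff_true]
        intro h1 h2; exact absurd ⟨h1, h2⟩ hq
      rw [heq3]; exact MeasurableSet.univ
  -- the pieces
  set T' : ℕ × ℕ × ℕ → Set ℝ := fun p =>
    E p.1 p.2.1 ∩ Set.Icc (p.2.2 * (1/(2*(p.2.1+1)))) ((p.2.2+1) * (1/(2*(p.2.1+1)))) with hT'def
  have hT'meas : ∀ p, MeasurableSet (T' p) := fun p => (hEmeas _ _).inter measurableSet_Icc
  have hT'sub : ∀ p, T' p ⊆ Set.Icc (0:ℝ) 1 := fun p x hx => hx.1.1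
  -- Lipschitz estimate on each piece
  have hT'lip : ∀ p, LipschitzOnWith ((4 * p.1 : ℕ) : ℝ≥0) f (T' p) := by
    rintro ⟨M, m, j⟩
    apply LipschitzOnWith.of_dist_le_mul
    intro x hx z hz
    rcases eq_or_ne x z with rfl | hxz
    · simp
    set w : ℝ := 1/(2*(m+1)) with hwdef
    have hwpos : 0 < w := by positivity
    have hd : 0 < |x - z| := abs_pos.mpr (sub_ne_zero.mpr hxz)
    have hdw : |x - z| ≤ w := by
      obtain ⟨hx1, hx2⟩ := hx.2
      obtain ⟨hz1, hz2⟩ := hz.2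
      simp only at hx1 hx2 hz1 hz2
      have hexp : ((j:ℝ)+1) * w = (j:ℝ)*w + w := by ring
      rw [abs_sub_le_iff]
      constructor <;> linarith
    obtain ⟨q, hq1, hq2⟩ := exists_rat_btwn (show (4/3) * |x - z| < 2 * |x - z| by linarith)
    have hq0 : 0 < (q:ℝ) := lt_of_lt_of_le (by linarith) hq1.le
    have hqd : |x - z| < (q:ℝ) := by linarith
    have hqle : (q:ℝ) ≤ 1/(m+1) := by
      have h2w : 2 * w = 1/((m:ℝ)+1) := by rw [hwdef]; field_simp
      linarith
    have hbx := hx.1.2 q hq0 hqle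
    have hbz := hz.1.2 q hq0 hqle
    -- the two density sets intersect
    set A := Sslope f x M ∩ Metric.closedBall x (q:ℝ)
    set B := Sslope f z M ∩ Metric.closedBall z (q:ℝ)
    have hU : A ∪ B ⊆ Metric.closedBall x ((q:ℝ) + |x - z|) := by
      rintro y (hy | hy)
      · exact Metric.closedBall_subset_closedBall (by linarith) hy.2
      · have htri : dist y x ≤ dist y z + dist z x := dist_triangle y z x
        have h1 : dist y z ≤ (q:ℝ) := hy.2
        have h2 : dist z x = |x - z| := by rw [Real.dist_eq, abs_sub_comm]
        exact Metric.mem_closedBall.mpr (by linarith)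

    have hlt : volume (Metric.closedBall x ((q:ℝ) + |x - z|)) < volume A + volume B := by
      have hvA : ENNReal.ofReal (7/8) * ENNReal.ofReal (2*(q:ℝ)) ≤ volume A := by
        rw [← Real.volume_closedBall x (q:ℝ)]; exact hbx
      have hvB : ENNReal.ofReal (7/8) * ENNReal.ofReal (2*(q:ℝ)) ≤ volume B := by
        rw [← Real.volume_closedBall z (q:ℝ)]; exact hbz
      have hUvol : volume (Metric.closedBall x ((q:ℝ) + |x - z|))
          = ENNReal.ofReal (2*((q:ℝ) + |x - z|)) := Real.volume_closedBall _ _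
      rw [hUvol]
      calc ENNReal.ofReal (2*((q:ℝ) + |x - z|))
          < ENNReal.ofReal (7/8 * (2*(q:ℝ)) + 7/8 * (2*(q:ℝ))) := by
            rw [ENNReal.ofReal_lt_ofReal_iff (by positivity)]
            linarith
        _ = ENNReal.ofReal (7/8) * ENNReal.ofReal (2*(q:ℝ))
            + ENNReal.ofReal (7/8) * ENNReal.ofReal (2*(q:ℝ)) := by
            rw [← ENNReal.ofReal_mul (by norm_num), ← ENNReal.ofReal_add] <;> positivity
        _ ≤ volume A + volume B := add_le_add hvA hvB
    obtain ⟨y, hyA, hyB⟩ := nonempty_of_measure_lt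
      ((measSslope hfm x M).inter measurableSet_closedBall) hU hlt
    have hMnn : (0:ℝ) ≤ (M:ℝ) := Nat.cast_nonneg M
    have hyx : |y - x| ≤ (q:ℝ) := by rw [← Real.dist_eq]; exact hyA.2
    have hyz : |y - z| ≤ (q:ℝ) := by rw [← Real.dist_eq]; exact hyB.2
    have h1 : |f y - f x| ≤ (M:ℝ) * (q:ℝ) :=
      le_trans hyA.1.2 (by nlinarith [abs_nonneg (y - x)])
    have h2 : |f y - f z| ≤ (M:ℝ) * (q:ℝ) :=
      le_trans hyB.1.2 (by nlinarith [abs_nonneg (y - z)])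
    have hfin : |f x - f z| ≤ 4 * (M:ℝ) * |x - z| := by
      have : |f x - f z| ≤ |f y - f x| + |f y - f z| := by
        rw [show f x - f z = -(f y - f x) + (f y - f z) by ring]
        exact le_trans (abs_add_le _ _) (by rw [abs_neg])
      nlinarith
    rw [Real.dist_eq, Real.dist_eq]
    calc |f x - f z| ≤ 4 * (M:ℝ) * |x - z| := hfin
      _ = (((4 * M : ℕ) : ℝ≥0) : ℝ) * |x - z| := by push_cast; ring
  -- coverage
  have hcover : ∀ x ∈ Set.Icc (0:ℝ) 1, (∃ a, HasApproxDerivAt (Set.Icc 0 1) f a x) →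
      ∃ p, x ∈ T' p := by
    rintro x hxI ⟨a, ha⟩
    set M : ℕ := ⌈|a|⌉₊ + 1 with hMdef
    have hM : |a| + 1 ≤ (M:ℝ) := by
      have := Nat.le_ceil |a|
      push_cast [hMdef]; linarith
    have hd := ha 1 one_pos
    set T₁ := {y | y ∈ Set.Icc (0:ℝ) 1 ∧ y ≠ x ∧ |f y - f x - a * (y - x)| / |y - x| < 1} with hT₁
    have hsub : T₁ ⊆ Sslope f x M := by
      rintro y ⟨hyI, hyx, hlt⟩
      have hyxpos : 0 < |y - x| := abs_pos.mpr (sub_ne_zero.mpr hyx)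
      rw [div_lt_iff₀ hyxpos, one_mul] at hlt
      refine ⟨hyI, ?_⟩
      have habs : |f y - f x| ≤ |f y - f x - a * (y - x)| + |a| * |y - x| := by
        have h0 : f y - f x = (f y - f x - a * (y - x)) + a * (y - x) := by ring
        calc |f y - f x| = |(f y - f x - a * (y - x)) + a * (y - x)| := by rw [← h0]
          _ ≤ |f y - f x - a * (y - x)| + |a * (y - x)| := abs_add_le _ _
          _ = |f y - f x - a * (y - x)| + |a| * |y - x| := by rw [abs_mul]
      nlinarith [abs_nonneg a]
    have hc : (ENNReal.ofReal (7/8) : ℝ≥0∞) < 1 := by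
      rw [← ENNReal.ofReal_one, ENNReal.ofReal_lt_ofReal_iff one_pos]; norm_num
    have hev := hd.eventually_le hc
    obtain ⟨δ, hδmem, hδ⟩ := mem_nhdsGT_iff_exists_Ioo_subset.mp hev
    rw [Set.mem_Ioi] at hδmem
    obtain ⟨m, hm⟩ := exists_nat_one_div_lt hδmem
    have hxE : x ∈ E M m := by
      refine ⟨hxI, fun q hq0 hqle => ?_⟩
      have hqδ : (q:ℝ) ∈ Set.Ioo 0 δ := ⟨hq0, lt_of_le_of_lt hqle hm⟩
      have := hδ hqδ
      refine le_trans this (measure_mono ?_)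
      exact Set.inter_subset_inter_left _ hsub
    set w : ℝ := 1/(2*(m+1)) with hwdef
    have hwpos : 0 < w := by positivity
    set j : ℕ := ⌊x / w⌋₊ with hjdef
    have hx0 : (0:ℝ) ≤ x := hxI.1
    have hj1 : (j:ℝ) * w ≤ x := by
      have := Nat.floor_le (div_nonneg hx0 hwpos.le)
      calc (j:ℝ) * w ≤ (x / w) * w := by nlinarith
        _ = x := by field_simp
    have hj2 : x ≤ ((j:ℝ)+1) * w := by
      have := Nat.lt_floor_add_one (x / w)
      calc x = (x / w) * w := by field_simp
        _ ≤ ((j:ℝ)+1) * w := by nlinarith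
    exact ⟨⟨M, m, j⟩, hxE, hj1, hj2⟩
  -- re-index by ℕ
  set e := Denumerable.eqv (ℕ × ℕ × ℕ) with hedef
  refine ⟨fun i => T' (e.symm i), fun i => hT'meas _, fun i => hT'sub _,
    fun i => ⟨_, hT'lip _⟩, ?_⟩
  intro x hx hax
  obtain ⟨p, hp⟩ := hcover x hx hax
  exact Set.mem_iUnion.mpr ⟨e p, by rwa [Equiv.symm_apply_apply]⟩
end Whitney

lemma floor_piece {x u : ℝ} (hx : 0 ≤ x) (hu : 0 < u) :
    (⌊x/u⌋₊ : ℝ) * u ≤ x ∧ x ≤ ((⌊x/u⌋₊ : ℝ)+1) * u := by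
  constructor
  · have := Nat.floor_le (div_nonneg hx hu.le)
    calc (⌊x/u⌋₊ : ℝ) * u ≤ (x / u) * u := by nlinarith
      _ = x := by field_simp
  · have := Nat.lt_floor_add_one (x / u)
    calc x = (x / u) * u := by field_simp
      _ ≤ ((⌊x/u⌋₊ : ℝ)+1) * u := by nlinarith

section Decomp
variable {f : ℝ → ℝ}

lemma decomp (hfm : Measurable f)
    (hdiff : volume {x ∈ Set.Icc (0:ℝ) 1 | ¬∃ a, HasApproxDerivAt (Set.Icc 0 1) f a x} = 0) :
    ∃ (R W : ℕ → Set ℝ) (Z : Set ℝ),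
      Pairwise (Function.onFun Disjoint R) ∧
      (∀ i, MeasurableSet (R i) ∧ R i ⊆ Set.Icc 0 1 ∧ Set.InjOn f (R i) ∧
        ∀ x ∈ R i, HasDerivWithinAt f (approxDeriv (Set.Icc 0 1) f x) (R i) x) ∧
      (∀ j, MeasurableSet (W j) ∧ W j ⊆ Set.Icc 0 1 ∧
        (∀ x ∈ W j, HasDerivWithinAt f 0 (W j) x) ∧
        (∀ x ∈ W j, approxDeriv (Set.Icc 0 1) f x = 0)) ∧
      Z ⊆ Set.Icc 0 1 ∧ volume Z = 0 ∧
      Set.Icc (0:ℝ) 1 ⊆ (Z ∪ (⋃ i, R i)) ∪ ⋃ j, W j := by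
  classical
  obtain ⟨T, hTm, hTsub, hTlip, hTcov⟩ := whitney hfm
  choose c hc using hTlip
  choose F hFlip hfF using fun i => (hc i).extend_real
  -- the good sets
  set good : ℕ → Set ℝ := fun i => {x ∈ T i | DifferentiableAt ℝ (F i) x ∧
    approxDeriv (Set.Icc 0 1) f x = deriv (F i) x} with hgood
  have hbad : ∀ i, volume (T i \ good i) = 0 := by
    intro i
    have h1 : ∀ᵐ x ∂(volume.restrict (T i)), DensityPt (T i) x :=
      Besicovitch.ae_tendsto_measure_inter_div volume (T i)
    have h2 : ∀ᵐ x ∂(volume.restrict (T i)), DifferentiableAt ℝ (F i) x :=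
      ae_restrict_of_ae ((hFlip i).ae_differentiableAt)
    have h3 : ∀ᵐ x ∂(volume.restrict (T i)), x ∈ T i := ae_restrict_mem (hTm i)
    have h4 : ∀ᵐ x ∂(volume.restrict (T i)), ∃ a, HasApproxDerivAt (Set.Icc 0 1) f a x := by
      rw [ae_iff, Measure.restrict_apply' (hTm i)]
      refine measure_mono_null ?_ hdiff
      rintro x ⟨hna, hxT⟩
      exact ⟨hTsub i hxT, hna⟩
    have hae : ∀ᵐ x ∂(volume.restrict (T i)), x ∈ good i := by
      filter_upwards [h1, h2, h3, h4] with x hx1 hx2 hx3 hx4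
      refine ⟨hx3, hx2, ?_⟩
      exact approx_eq_deriv hfm (approxDeriv_spec hx4) hx2.hasDerivAt (hTm i) hx1
        (fun y hy => hfF i hy) hx3
    have := ae_iff.mp hae
    rw [Measure.restrict_apply' (hTm i)] at this
    rw [Set.diff_eq, Set.inter_comm]
    exact this
  set Nn : ℕ → Set ℝ := fun i => toMeasurable volume (T i \ good i) with hNn
  have hNnull : ∀ i, volume (Nn i) = 0 := fun i => by
    rw [hNn]; simp only [measure_toMeasurable]; exact hbad i
  set A : ℕ → Set ℝ := fun i => T i \ Nn i with hA
  have hAmeas : ∀ i, MeasurableSet (A i) := fun i =>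
    (hTm i).diff (measurableSet_toMeasurable _ _)
  have hAgood : ∀ i, A i ⊆ good i := by
    intro i x hx
    by_contra hxg
    exact hx.2 (subset_toMeasurable _ _ ⟨hx.1, hxg⟩)
  have hAT : ∀ i, A i ⊆ T i := fun i => Set.diff_subset
  -- the zero-derivative pieces
  set W : ℕ → Set ℝ := fun j => A j ∩ {x | deriv (F j) x = 0} with hW
  have hWprop : ∀ j, MeasurableSet (W j) ∧ W j ⊆ Set.Icc 0 1 ∧
      (∀ x ∈ W j, HasDerivWithinAt f 0 (W j) x) ∧
      (∀ x ∈ W j, approxDeriv (Set.Icc 0 1) f x = 0) := by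
    intro j
    refine ⟨(hAmeas j).inter ((measurable_deriv (F j)) (measurableSet_singleton 0)), 
      fun x hx => hTsub j (hAT j hx.1), ?_, ?_⟩
    · intro x hx
      have hdiffx := (hAgood j hx.1).2.1
      have hd0 : deriv (F j) x = 0 := hx.2
      have : HasDerivWithinAt (F j) 0 (W j) x := by
        have := hdiffx.hasDerivAt
        rw [hd0] at this
        exact this.hasDerivWithinAt
      exact this.congr (fun y hy => hfF j (hAT j hy.1)) (hfF j (hAT j hx.1))
    · intro x hx
      rw [(hAgood j hx.1).2.2, hx.2]
  -- injectivity pieces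
  set Inj : ℕ → ℕ → Set ℝ := fun i m =>
    ⋂ q : ℚ, {x : ℝ | |(q:ℝ) - x| < 2/(m+1) → |(q:ℝ) - x| ≤ (m+1) * |F i q - F i x|} with hInjdef
  have hInjmeas : ∀ i m, MeasurableSet (Inj i m) := by
    intro i m
    refine MeasurableSet.iInter fun q => ?_
    have : {x : ℝ | |(q:ℝ) - x| < 2/(m+1) → |(q:ℝ) - x| ≤ (m+1) * |F i q - F i x|}
        = {x : ℝ | |(q:ℝ) - x| < 2/(m+1)}ᶜ ∪ {x : ℝ | |(q:ℝ) - x| ≤ (m+1) * |F i q - F i x|} := by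
      ext x; simp only [Set.mem_union, Set.mem_compl_iff, Set.mem_setOf_eq]; tauto
    rw [this]
    refine MeasurableSet.union (MeasurableSet.compl ?_) ?_
    · exact measurableSet_lt (measurable_const.sub measurable_id).abs measurable_const
    · exact measurableSet_le (measurable_const.sub measurable_id).abs
        (measurable_const.mul ((measurable_const.sub
          ((hFlip i).continuous.measurable)).abs))
  have hInjkey : ∀ i m x z, x ∈ Inj i m → |z - x| < 2/((m:ℝ)+1) →
      |z - x| ≤ ((m:ℝ)+1) * |F i z - F i x| := by
    intro i m x z hx hlt
    by_contra hcon
    push_neg at hcon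
    set O : Set ℝ := {z' | ((m:ℝ)+1) * |F i z' - F i x| < |z' - x|}
      ∩ {z' | |z' - x| < 2/((m:ℝ)+1)} with hO
    have hcF : Continuous fun z' => ((m:ℝ)+1) * |F i z' - F i x| :=
      continuous_const.mul (((hFlip i).continuous.sub continuous_const).abs)
    have hcI : Continuous fun z' : ℝ => |z' - x| :=
      (continuous_id.sub continuous_const).abs
    have hOopen : IsOpen O := (isOpen_lt hcF hcI).inter (isOpen_lt hcI continuous_const)
    have hzO : z ∈ O := ⟨hcon, hlt⟩
    obtain ⟨q, hq⟩ := Rat.denseRange_cast.exists_mem_open hOopen ⟨z, hzO⟩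
    have h1 := Set.mem_iInter.mp hx q
    exact absurd (h1 hq.2) (not_le.mpr hq.1)
  have hInjcov : ∀ i, ∀ x ∈ A i, deriv (F i) x ≠ 0 → ∃ m, x ∈ Inj i m := by
    intro i x hx hc0
    set cv := deriv (F i) x with hcv
    have hcpos : 0 < |cv| := abs_pos.mpr hc0
    have hd := (hAgood i hx).2.1.hasDerivAt
    have hlo := (hasDerivAt_iff_isLittleO.mp hd).def (half_pos hcpos)
    rw [Metric.eventually_nhds_iff] at hlo
    obtain ⟨δ, hδpos, hδ⟩ := hlo
    obtain ⟨m₁, hm₁⟩ := exists_nat_one_div_lt (half_pos hδpos)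
    obtain ⟨m₂, hm₂⟩ := exists_nat_gt (2/|cv|)
    set m := max m₁ m₂ with hm
    refine ⟨m, Set.mem_iInter.mpr fun q => ?_⟩
    intro hqx
    have hmm : 2/((m:ℝ)+1) ≤ 2/((m₁:ℝ)+1) := by
      apply div_le_div_of_nonneg_left (by norm_num) (by positivity)
      have : (m₁:ℝ) ≤ (m:ℝ) := Nat.cast_le.mpr (le_max_left _ _)
      linarith
    have hqδ : dist (q:ℝ) x < δ := by
      rw [Real.dist_eq]
      calc |(q:ℝ) - x| < 2/((m:ℝ)+1) := hqx
        _ ≤ 2/((m₁:ℝ)+1) := hmm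
        _ = 2 * (1/((m₁:ℝ)+1)) := by ring
        _ < 2 * (δ/2) := by linarith
        _ = δ := by ring
    have hest := hδ hqδ
    rw [Real.norm_eq_abs, Real.norm_eq_abs] at hest
    -- |F q - F x| ≥ (|cv|/2) |q - x|
    have hrev : |cv|/2 * |(q:ℝ) - x| ≤ |F i q - F i x| := by
      have h1 : |((q:ℝ) - x) * cv| - |F i q - F i x - ((q:ℝ) - x) * cv| ≤ |F i q - F i x| := by
        have := abs_sub_abs_le_abs_sub (((q:ℝ) - x) * cv) (((q:ℝ) - x) * cv - (F i q - F i x))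
        have heq : ((q:ℝ) - x) * cv - (((q:ℝ) - x) * cv - (F i q - F i x)) = F i q - F i x := by ring
        rw [heq] at this
        rw [show |((q:ℝ) - x) * cv - (F i q - F i x)| = |F i q - F i x - ((q:ℝ) - x) * cv| by
          rw [abs_sub_comm]] at this
        linarith
      have h2 : |F i q - F i x - ((q:ℝ) - x) * cv| ≤ |cv|/2 * |(q:ℝ) - x| := by
        have := hest
        rw [show ((q:ℝ) - x) • cv = ((q:ℝ) - x) * cv by simp [smul_eq_mul]] at this
        linarith
      rw [abs_mul] at h1
      nlinarith [abs_nonneg ((q:ℝ) - x)]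
    have hm2 : 2/|cv| ≤ (m:ℝ)+1 := by
      have : (m₂:ℝ) ≤ (m:ℝ) := Nat.cast_le.mpr (le_max_right _ _)
      linarith
    calc |(q:ℝ) - x| ≤ (2/|cv|) * |F i q - F i x| := by
          rw [div_mul_eq_mul_div, le_div_iff₀ hcpos]
          nlinarith
      _ ≤ ((m:ℝ)+1) * |F i q - F i x| := by
          apply mul_le_mul_of_nonneg_right hm2 (abs_nonneg _)
  -- the injective pieces
  set Q : ℕ × ℕ × ℕ → Set ℝ := fun p =>
    ((A p.1 ∩ {x | deriv (F p.1) x ≠ 0}) ∩ Inj p.1 p.2.1) ∩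
      Set.Icc ((p.2.2:ℝ) * (1/(p.2.1+1))) ((p.2.2+1) * (1/(p.2.1+1))) with hQ
  have hQmeas : ∀ p, MeasurableSet (Q p) :=
    fun p => (((hAmeas p.1).inter
      ((measurable_deriv (F p.1) (measurableSet_singleton 0)).compl)).inter
        (hInjmeas p.1 p.2.1)).inter measurableSet_Icc
  have hQsub : ∀ p, Q p ⊆ Set.Icc 0 1 := fun p x hx => hTsub p.1 (hAT p.1 hx.1.1.1)
  have hQinj : ∀ p, Set.InjOn f (Q p) := by
    rintro ⟨i, m, j⟩ x hx z hz hfxz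
    have hFxz : F i x = F i z := by
      rw [← hfF i (hAT i hx.1.1.1), ← hfF i (hAT i hz.1.1.1)]; exact hfxz
    have hdist : |z - x| ≤ 1/((m:ℝ)+1) := by
      obtain ⟨hx1, hx2⟩ := hx.2
      obtain ⟨hz1, hz2⟩ := hz.2
      simp only at hx1 hx2 hz1 hz2
      have hexp : ((j:ℝ)+1) * (1/((m:ℝ)+1)) = (j:ℝ)*(1/((m:ℝ)+1)) + 1/((m:ℝ)+1) := by ring
      rw [abs_sub_le_iff]
      constructor <;> linarith
    have hlt : |z - x| < 2/((m:ℝ)+1) := by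
      have h2 : 2/((m:ℝ)+1) = 2 * (1/((m:ℝ)+1)) := by ring
      have hp : (0:ℝ) < 1/((m:ℝ)+1) := by positivity
      linarith
    have hkey := hInjkey i m x z hx.1.2 hlt
    rw [hFxz] at hkey
    simp only [sub_self, abs_zero, mul_zero] at hkey
    have h0 : z - x = 0 := abs_eq_zero.mp (le_antisymm hkey (abs_nonneg _))
    exact (sub_eq_zero.mp h0).symm
  have hQderiv : ∀ p, ∀ x ∈ Q p, HasDerivWithinAt f (approxDeriv (Set.Icc 0 1) f x) (Q p) x := by
    rintro p x hx
    have hgx := hAgood p.1 hx.1.1.1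
    have hd := hgx.2.1.hasDerivAt
    have hFd : HasDerivWithinAt (F p.1) (approxDeriv (Set.Icc 0 1) f x) (Q p) x := by
      rw [hgx.2.2]; exact hd.hasDerivWithinAt
    exact hFd.congr (fun y hy => hfF p.1 (hAT p.1 hy.1.1.1)) (hfF p.1 (hAT p.1 hx.1.1.1))
  -- assemble
  set e := Denumerable.eqv (ℕ × ℕ × ℕ) with hedef
  refine ⟨disjointed (fun n => Q (e.symm n)), W,
    (Set.Icc (0:ℝ) 1 ∩ (⋃ i, T i)ᶜ) ∪ ⋃ i, (T i ∩ Nn i), disjoint_disjointed _, ?_, hWprop,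
    ?_, ?_, ?_⟩
  · intro n
    have hsubQ : disjointed (fun n => Q (e.symm n)) n ⊆ Q (e.symm n) := disjointed_subset _ n
    exact ⟨MeasurableSet.disjointed (fun k => hQmeas _) n, hsubQ.trans (hQsub _),
      (hQinj _).mono hsubQ, fun x hx => (hQderiv _ x (hsubQ hx)).mono hsubQ⟩
  · rintro x (⟨hx1, _⟩ | hx2)
    · exact hx1
    · obtain ⟨i, hi, _⟩ := Set.mem_iUnion.mp hx2
      exact hTsub i hi
  · apply measure_union_null
    · refine measure_mono_null ?_ hdiff
      rintro x ⟨hx1, hx2⟩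
      refine ⟨hx1, fun ha => ?_⟩
      exact hx2 (hTcov x hx1 ha)
    · exact measure_iUnion_null fun i =>
        measure_mono_null Set.inter_subset_right (hNnull i)
  · intro x hxI
    by_cases hT : x ∈ ⋃ i, T i
    · obtain ⟨i, hi⟩ := Set.mem_iUnion.mp hT
      by_cases hN : x ∈ Nn i
      · exact Set.mem_union_left _ (Set.mem_union_left _
          (Set.mem_union_right _ (Set.mem_iUnion.mpr ⟨i, hi, hN⟩)))
      have hxA : x ∈ A i := ⟨hi, hN⟩
      by_cases hder : deriv (F i) x = 0
      · exact Set.mem_union_right _ (Set.mem_iUnion.mpr ⟨i, hxA, hder⟩)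
      · obtain ⟨m, hm⟩ := hInjcov i x hxA hder
        have hu : (0:ℝ) < 1/((m:ℝ)+1) := by positivity
        obtain ⟨hj1, hj2⟩ := floor_piece hxI.1 hu
        refine Set.mem_union_left _ (Set.mem_union_right _ ?_)
        rw [iUnion_disjointed]
        refine Set.mem_iUnion.mpr ⟨e (i, m, ⌊x/(1/((m:ℝ)+1))⌋₊), ?_⟩
        rw [Equiv.symm_apply_apply]
        exact ⟨⟨⟨hxA, hder⟩, hm⟩, hj1, hj2⟩
    · exact Set.mem_union_left _ (Set.mem_union_left _ (Set.mem_union_left _ ⟨hxI, hT⟩))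
end Decomp

lemma lintegral_image_eq' {s : Set ℝ} {f f' : ℝ → ℝ} (hs : MeasurableSet s)
    (hf' : ∀ x ∈ s, HasDerivWithinAt f (f' x) s x) (hf : Set.InjOn f s) (g : ℝ → ℝ≥0∞) :
    ∫⁻ x in f '' s, g x = ∫⁻ x in s, ENNReal.ofReal |f' x| * g (f x) := by
  simpa only [ContinuousLinearMap.det_toSpanSingleton] using
    MeasureTheory.lintegral_image_eq_lintegral_abs_det_fderiv_mul volume hs
      (fun x hx => (hf' x hx).hasFDerivWithinAt) hf g

lemma area_bound {f : ℝ → ℝ} (hfm : Measurable f)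
    (hmaps : Set.MapsTo f (Set.Icc 0 1) (Set.Icc 0 1))
    (hdiff : volume {x ∈ Set.Icc (0:ℝ) 1 | ¬∃ a, HasApproxDerivAt (Set.Icc 0 1) f a x} = 0)
    {K : ℕ}
    (hK : volume {y ∈ Set.Icc (0:ℝ) 1 | (K : ℕ∞) < (Set.Icc (0:ℝ) 1 ∩ f ⁻¹' {y}).encard} = 0)
    (hLuzin : ∀ A ⊆ Set.Icc (0:ℝ) 1, volume A = 0 → volume (f '' A) = 0) :
    ∃ M : Set ℝ, MeasurableSet M ∧ M ⊆ f '' Set.Icc 0 1 ∧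
      (∀ φ : ℝ → ℝ≥0∞, Measurable φ →
        ∫⁻ x in Set.Icc 0 1,
            ENNReal.ofReal |approxDeriv (Set.Icc 0 1) f x| * φ (f x) ∂volume
          ≤ (K : ℝ≥0∞) * ∫⁻ y, M.indicator φ y ∂volume) ∧
      ((∀ᵐ x ∂(volume.restrict (Set.Icc (0:ℝ) 1)), approxDeriv (Set.Icc 0 1) f x = 0) →
        volume (f '' Set.Icc (0:ℝ) 1) = 0) := by
  classical
  obtain ⟨R, W, Z, hRdisj, hRprop, hWprop, hZsub, hZnull, hcov⟩ := decomp hfm hdiff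
  set D := approxDeriv (Set.Icc (0:ℝ) 1) f with hD
  have hRim : ∀ i, MeasurableSet (f '' R i) :=
    fun i => (hRprop i).1.image_of_measurable_injOn hfm (hRprop i).2.2.1
  refine ⟨⋃ i, f '' R i, MeasurableSet.iUnion hRim,
    Set.iUnion_subset fun i => Set.image_mono (hRprop i).2.1, ?_, ?_⟩
  · -- main integral bound
    intro φ hφ
    set ψ : ℝ → ℝ≥0∞ := fun x => ENNReal.ofReal |D x| * φ (f x) with hψ
    -- measure comparison
    have hmeasle : volume.restrict (Set.Icc (0:ℝ) 1) ≤
        ((volume.restrict Z + Measure.sum fun i => volume.restrict (R i)) +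
          Measure.sum fun j => volume.restrict (W j)) := by
      calc volume.restrict (Set.Icc (0:ℝ) 1)
          ≤ volume.restrict ((Z ∪ ⋃ i, R i) ∪ ⋃ j, W j) := Measure.restrict_mono hcov le_rfl
        _ ≤ volume.restrict (Z ∪ ⋃ i, R i) + volume.restrict (⋃ j, W j) :=
            Measure.restrict_union_le _ _
        _ ≤ ((volume.restrict Z + Measure.sum fun i => volume.restrict (R i)) +
              Measure.sum fun j => volume.restrict (W j)) := by
            refine add_le_add (le_trans (Measure.restrict_union_le _ _) ?_)
              Measure.restrict_iUnion_le
            exact add_le_add le_rfl Measure.restrict_iUnion_le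
    have hsplit : ∫⁻ x in Set.Icc (0:ℝ) 1, ψ x ∂volume ≤
        (∫⁻ x, ψ x ∂(volume.restrict Z) + ∑' i, ∫⁻ x, ψ x ∂(volume.restrict (R i)))
          + ∑' j, ∫⁻ x, ψ x ∂(volume.restrict (W j)) := by
      refine le_trans (lintegral_mono' hmeasle le_rfl) ?_
      rw [lintegral_add_measure, lintegral_add_measure, lintegral_sum_measure,
        lintegral_sum_measure]
    have hZ0 : ∫⁻ x, ψ x ∂(volume.restrict Z) = 0 := by
      rw [Measure.restrict_eq_zero.mpr hZnull, lintegral_zero_measure]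
    have hW0 : ∀ j, ∫⁻ x, ψ x ∂(volume.restrict (W j)) = 0 := by
      intro j
      have : ∀ᵐ x ∂(volume.restrict (W j)), ψ x = 0 := by
        filter_upwards [ae_restrict_mem (hWprop j).1] with x hx
        rw [hψ]
        simp only [(hWprop j).2.2.2 x hx, abs_zero, ENNReal.ofReal_zero, zero_mul]
      rw [lintegral_congr_ae this, lintegral_zero]
    have hR0 : ∀ i, ∫⁻ x, ψ x ∂(volume.restrict (R i)) =
        ∫⁻ y, (f '' R i).indicator φ y ∂volume := by
      intro i
      rw [lintegral_indicator (hRim i)]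
      rw [← lintegral_image_eq' (hRprop i).1 (hRprop i).2.2.2 (hRprop i).2.2.1 φ]
    -- counting bound
    have hcount : ∀ᵐ y ∂(volume : Measure ℝ),
        (∑' i, (f '' R i).indicator φ y) ≤ (K : ℝ≥0∞) * (⋃ i, f '' R i).indicator φ y := by
      have hae : ∀ᵐ y ∂(volume : Measure ℝ),
          y ∉ {y ∈ Set.Icc (0:ℝ) 1 | (K : ℕ∞) < (Set.Icc (0:ℝ) 1 ∩ f ⁻¹' {y}).encard} :=
        measure_eq_zero_iff_ae_notMem.mp hK
      filter_upwards [hae] with y hy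
      by_cases hyM : y ∈ ⋃ i, f '' R i
      · rw [Set.indicator_of_mem hyM]
        have hiter : ∀ i, (f '' R i).indicator φ y
            = (f '' R i).indicator (fun _ => (1:ℝ≥0∞)) y * φ y := by
          intro i
          by_cases h : y ∈ f '' R i
          · rw [Set.indicator_of_mem h, Set.indicator_of_mem h, one_mul]
          · rw [Set.indicator_of_notMem h, Set.indicator_of_notMem h, zero_mul]
        rw [tsum_congr hiter, ENNReal.tsum_mul_right]
        apply mul_le_mul_left
        -- the multiplicity of y is at most K
        by_contra hcon
        push_neg at hcon
        rw [ENNReal.tsum_eq_iSup_sum] at hcon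
        obtain ⟨s, hs⟩ := lt_iSup_iff.mp hcon
        set t := s.filter (fun i => y ∈ f '' R i) with ht
        have hsum : ∑ i ∈ s, (f '' R i).indicator (fun _ => (1:ℝ≥0∞)) y = (t.card : ℝ≥0∞) := by
          rw [ht]
          rw [show (fun i => (f '' R i).indicator (fun _ => (1:ℝ≥0∞)) y)
            = fun i => if y ∈ f '' R i then (1:ℝ≥0∞) else 0 from funext fun i => Set.indicator_apply _ _ _]
          rw [Finset.sum_ite, Finset.sum_const, Finset.sum_const_zero, add_zero, nsmul_eq_mul,
            mul_one]
        rw [hsum] at hs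
        have htK : K < t.card := by exact_mod_cast hs
        have hex : ∀ i ∈ t, ∃ x, x ∈ R i ∧ f x = y := by
          intro i hi
          exact (Finset.mem_filter.mp hi).2
        choose! v hv1 hv2 using hex
        have hinj : Set.InjOn v ↑t := by
          intro i hi k hk hik
          by_contra hne
          have h1 : v i ∈ R i := hv1 i hi
          have h2 : v k ∈ R k := hv1 k hk
          rw [hik] at h1
          exact Set.disjoint_left.mp (hRdisj hne) h1 h2
        have hsubset : v '' ↑t ⊆ Set.Icc (0:ℝ) 1 ∩ f ⁻¹' {y} := by
          rintro z ⟨i, hi, rfl⟩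
          exact ⟨(hRprop i).2.1 (hv1 i hi), by simp [hv2 i hi]⟩
        have hez : (t.card : ℕ∞) ≤ (Set.Icc (0:ℝ) 1 ∩ f ⁻¹' {y}).encard := by
          calc (t.card : ℕ∞) = (↑t : Set ℕ).encard :=
                (Set.encard_coe_eq_coe_finsetCard t).symm
            _ = (v '' ↑t).encard := (hinj.encard_image).symm
            _ ≤ _ := Set.encard_mono hsubset
        have hyI : y ∈ Set.Icc (0:ℝ) 1 := by
          obtain ⟨i0, hyi0⟩ := Set.mem_iUnion.mp hyM
          obtain ⟨x0, hx0, hfx0⟩ := hyi0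
          rw [← hfx0]; exact hmaps ((hRprop i0).2.1 hx0)
        exact hy ⟨hyI, lt_of_lt_of_le (Nat.cast_lt.mpr htK) hez⟩
      · have : ∀ i, (f '' R i).indicator φ y = 0 := by
          intro i
          apply Set.indicator_of_notMem
          exact fun h => hyM (Set.mem_iUnion.mpr ⟨i, h⟩)
        rw [tsum_congr this, tsum_zero]
        exact zero_le
    calc ∫⁻ x in Set.Icc (0:ℝ) 1, ψ x ∂volume
        ≤ (∫⁻ x, ψ x ∂(volume.restrict Z) + ∑' i, ∫⁻ x, ψ x ∂(volume.restrict (R i)))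
            + ∑' j, ∫⁻ x, ψ x ∂(volume.restrict (W j)) := hsplit
      _ = ∑' i, ∫⁻ y, (f '' R i).indicator φ y ∂volume := by
          rw [hZ0, tsum_congr hW0, tsum_zero, tsum_congr hR0, zero_add, add_zero]
      _ = ∫⁻ y, ∑' i, (f '' R i).indicator φ y ∂volume := by
          rw [← lintegral_tsum (fun i => (hφ.indicator (hRim i)).aemeasurable)]
      _ ≤ ∫⁻ y, (K : ℝ≥0∞) * (⋃ i, f '' R i).indicator φ y ∂volume := lintegral_mono_ae hcount
      _ = (K : ℝ≥0∞) * ∫⁻ y, (⋃ i, f '' R i).indicator φ y ∂volume :=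
          lintegral_const_mul' _ _ (ENNReal.natCast_ne_top K)
  · -- image null when derivative vanishes a.e.
    intro hD0
    have himsub : f '' Set.Icc (0:ℝ) 1 ⊆
        (f '' Z ∪ ⋃ i, f '' R i) ∪ ⋃ j, f '' W j := by
      intro y hy
      obtain ⟨x, hx, rfl⟩ := hy
      rcases hcov hx with (hx1 | hx2) | hx3
      · exact Set.mem_union_left _ (Set.mem_union_left _ ⟨x, hx1, rfl⟩)
      · obtain ⟨i, hi⟩ := Set.mem_iUnion.mp hx2
        exact Set.mem_union_left _ (Set.mem_union_right _
          (Set.mem_iUnion.mpr ⟨i, ⟨x, hi, rfl⟩⟩))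
      · obtain ⟨j, hj⟩ := Set.mem_iUnion.mp hx3
        exact Set.mem_union_right _ (Set.mem_iUnion.mpr ⟨j, ⟨x, hj, rfl⟩⟩)
    refine measure_mono_null himsub ?_
    refine measure_union_null (measure_union_null ?_ ?_) ?_
    · exact hLuzin Z hZsub hZnull
    · refine measure_iUnion_null fun i => ?_
      have h1 : volume (f '' R i) = ∫⁻ x in R i, ENNReal.ofReal |D x| * 1 ∂volume := by
        rw [← lintegral_image_eq' (hRprop i).1 (hRprop i).2.2.2 (hRprop i).2.2.1
          (fun _ => (1:ℝ≥0∞)), setLIntegral_one]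
      rw [h1]
      have : ∀ᵐ x ∂(volume.restrict (R i)), ENNReal.ofReal |D x| * 1 = 0 := by
        filter_upwards [ae_restrict_of_ae_restrict_of_subset (hRprop i).2.1 hD0] with x hx
        simp [hx]
      rw [lintegral_congr_ae this, lintegral_zero]
    · refine measure_iUnion_null fun j => ?_
      have hb := MeasureTheory.addHaar_image_le_lintegral_abs_det_fderiv volume (hWprop j).1
        (f' := fun _ => ContinuousLinearMap.toSpanSingleton ℝ (0:ℝ))
        (fun x hx => ((hWprop j).2.2.1 x hx).hasFDerivWithinAt)
      refine le_antisymm (le_trans hb ?_) zero_le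
      simp only [ContinuousLinearMap.det_toSpanSingleton, abs_zero, ENNReal.ofReal_zero,
        lintegral_const, zero_mul, le_refl]

lemma mult_bound {N : ℕ} {f : Fin N → ℝ → ℝ} {L : ℕ}
    (hL : IsGreatest {m : ℕ | 1 ≤ m ∧ m ≤ N ∧ ∃ s : Finset (Fin N), s.card = m ∧
      0 < volume (⋂ n ∈ s, f n '' Set.Icc (0:ℝ) 1)} L)
    (M : Fin N → Set ℝ) (hM : ∀ n, M n ⊆ f n '' Set.Icc (0:ℝ) 1) :
    ∀ᵐ y ∂(volume : Measure ℝ),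
      ∑ n, (M n).indicator (fun _ => (1:ℝ≥0∞)) y ≤ (L:ℝ≥0∞) := by
  classical
  have hnull : ∀ s : Finset (Fin N), s.card = L + 1 → volume (⋂ n ∈ s, M n) = 0 := by
    intro s hs
    by_contra h0
    have hpos : 0 < volume (⋂ n ∈ s, M n) := pos_iff_ne_zero.mpr h0
    have hsub : (⋂ n ∈ s, M n) ⊆ ⋂ n ∈ s, f n '' Set.Icc (0:ℝ) 1 :=
      Set.iInter₂_mono fun n _ => hM n
    have hmem : L + 1 ∈ {m : ℕ | 1 ≤ m ∧ m ≤ N ∧ ∃ s : Finset (Fin N), s.card = m ∧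
        0 < volume (⋂ n ∈ s, f n '' Set.Icc (0:ℝ) 1)} := by
      refine ⟨Nat.le_add_left 1 L, ?_, s, hs, lt_of_lt_of_le hpos (measure_mono hsub)⟩
      calc L + 1 = s.card := hs.symm
        _ ≤ Fintype.card (Fin N) := Finset.card_le_univ s
        _ = N := Fintype.card_fin N
    exact absurd (hL.2 hmem) (by omega)
  have hUnull : volume {y : ℝ | ¬ (∑ n, (M n).indicator (fun _ => (1:ℝ≥0∞)) y ≤ (L:ℝ≥0∞))}
      = 0 := by
    refine measure_mono_null ?_ (measure_iUnion_null fun s : Finset (Fin N) =>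
      measure_iUnion_null fun hs : s.card = L + 1 => hnull s hs)
    intro y hy
    simp only [Set.mem_setOf_eq, not_le] at hy
    set t := Finset.univ.filter (fun n => y ∈ M n) with ht
    have hsum : ∑ n, (M n).indicator (fun _ => (1:ℝ≥0∞)) y = (t.card : ℝ≥0∞) := by
      rw [ht, show (fun n => (M n).indicator (fun _ => (1:ℝ≥0∞)) y)
          = fun n => if y ∈ M n then (1:ℝ≥0∞) else 0 from
          funext fun n => Set.indicator_apply _ _ _,
        Finset.sum_ite, Finset.sum_const, Finset.sum_const_zero, add_zero, nsmul_eq_mul, mul_one]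
    rw [hsum] at hy
    have htL : L + 1 ≤ t.card := by exact_mod_cast hy
    obtain ⟨s, hst, hscard⟩ := Finset.exists_subset_card_eq htL
    refine Set.mem_iUnion.mpr ⟨s, Set.mem_iUnion.mpr ⟨hscard, ?_⟩⟩
    refine Set.mem_iInter₂.mpr fun n hn => ?_
    exact (Finset.mem_filter.mp (hst hn)).2
  have := measure_eq_zero_iff_ae_notMem.mp hUnull
  filter_upwards [this] with y hy
  simpa using hy

set_option maxHeartbeats 1000000 in
set_option synthInstance.maxHeartbeats 200000 in
theorem stmt9 (N : ℕ) (f g' : Fin N → ℝ → ℝ)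
    (hfmeas : ∀ n, Measurable (f n)) (hgmeas : ∀ n, Measurable (g' n))
    (hmaps : ∀ n, MapsTo (f n) (Icc 0 1) (Icc 0 1))
    (H1diff : ∀ n,
      MeasureTheory.volume {x ∈ Icc (0 : ℝ) 1 | ¬∃ a, HasApproxDerivAt (Icc 0 1) (f n) a x} = 0)
    (H1LuzinN : ∀ n, ∀ A ⊆ Icc (0 : ℝ) 1,
      MeasureTheory.volume A = 0 → MeasureTheory.volume (f n '' A) = 0)
    (K : ℕ)
    (H2 : ∀ n,
      MeasureTheory.volume {y ∈ Icc (0 : ℝ) 1 | (K : ℕ∞) < (Icc (0 : ℝ) 1 ∩ f n ⁻¹' {y}).encard} = 0)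
    (H3 : ∀ n, ∀ A : Set ℝ,
      MeasureTheory.volume A = 0 → MeasureTheory.volume (Icc (0 : ℝ) 1 ∩ f n ⁻¹' A) = 0)
    (L : ℕ)
    (hL : IsGreatest {m : ℕ | 1 ≤ m ∧ m ≤ N ∧
      ∃ s : Finset (Fin N), s.card = m ∧
        0 < MeasureTheory.volume (⋂ n ∈ s, f n '' Icc (0 : ℝ) 1)} L)
    -- |gₙ(x)| ≤ (C/(KL)) |fₙ'(x)| a.e., with C < 1
    (C : ℝ) (hC1 : C < 1)
    (hC : ∀ n, ∀ᵐ x ∂μ01,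
      |g' n x| ≤ C / ((K : ℝ) * (L : ℝ)) * |approxDeriv (Icc 0 1) (f n) x|)
    -- P is the operator given by Ph = Σₙ gₙ · (h ∘ fₙ)
    (P : Lp ℝ 1 μ01 →L[ℝ] Lp ℝ 1 μ01)
    (hP : ∀ h : Lp ℝ 1 μ01,
      (P h : ℝ → ℝ) =ᵐ[μ01] fun x => ∑ n, g' n x * (h : ℝ → ℝ) (f n x))
    (g : Lp ℝ 1 μ01) :
    ∃ φ₀ : Lp ℝ 1 μ01,
      Tendsto (fun m => ∑ k ∈ Finset.range (m + 1), (P ^ k) g) atTop (𝓝 φ₀) ∧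
      φ₀ = P φ₀ + g ∧
      (∀ φ : Lp ℝ 1 μ01, φ = P φ + g → φ = φ₀) ∧
      ∀ m : ℕ, ‖φ₀ - ∑ k ∈ Finset.range (m + 1), (P ^ k) g‖ ≤ C ^ (m + 1) / (1 - C) * ‖g‖ := by
  classical
  -- area bounds for each fₙ
  choose Mset hMmeas hMsub hMint hMnull using fun n =>
    area_bound (hfmeas n) (hmaps n) (H1diff n) (H2 n) (H1LuzinN n)
  -- basic positivity facts
  have hL1 : 1 ≤ L := hL.1.1
  obtain ⟨s₀, hs₀card, hs₀pos⟩ := hL.1.2.2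
  have hs₀ne : s₀.Nonempty := Finset.card_pos.mp (by omega)
  obtain ⟨n₀, hn₀⟩ := hs₀ne
  have himg_pos : ∀ n ∈ s₀, volume (f n '' Icc (0:ℝ) 1) ≠ 0 := by
    intro n hn h0
    have hle : volume (⋂ n ∈ s₀, f n '' Icc (0:ℝ) 1) ≤ volume (f n '' Icc (0:ℝ) 1) :=
      measure_mono (Set.biInter_subset_of_mem (t := fun n => f n '' Icc (0:ℝ) 1) hn)
    rw [h0] at hle
    exact absurd (lt_of_lt_of_le hs₀pos hle) (lt_irrefl 0)
  have hK1 : 1 ≤ K := by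
    by_contra hK0
    have hK0' : K = 0 := by omega
    apply himg_pos n₀ hn₀
    refine measure_mono_null ?_ (H2 n₀)
    rintro y ⟨x, hx, rfl⟩
    refine ⟨hmaps n₀ hx, ?_⟩
    rw [hK0']
    simp only [Nat.cast_zero]
    exact Set.encard_pos.mpr ⟨x, hx, Set.mem_preimage.mpr rfl⟩
  have hKL : (0:ℝ) < (K : ℝ) * (L : ℝ) := by
    have : (1:ℝ) ≤ (K:ℝ) := by exact_mod_cast hK1
    have : (1:ℝ) ≤ (L:ℝ) := by exact_mod_cast hL1
    positivity
  have hC0 : 0 ≤ C := by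
    by_contra hC0
    push_neg at hC0
    have hcneg : C / ((K : ℝ) * (L : ℝ)) < 0 := div_neg_of_neg_of_pos hC0 hKL
    apply himg_pos n₀ hn₀
    apply hMnull n₀
    filter_upwards [hC n₀] with x hx
    by_contra hD
    have habs : 0 < |approxDeriv (Icc 0 1) (f n₀) x| := abs_pos.mpr hD
    nlinarith [abs_nonneg (g' n₀ x)]
  -- the contraction estimate
  have hPle : ∀ h : Lp ℝ 1 μ01, ‖P h‖ ≤ C * ‖h‖ := by
    intro h
    set hh : ℝ → ℝ := (h : ℝ → ℝ) with hhdef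
    set φ : ℝ → ℝ≥0∞ := fun y => (‖hh y‖₊ : ℝ≥0∞) with hφdef
    have hφm : Measurable φ := (Lp.stronglyMeasurable h).measurable.nnnorm.coe_nnreal_ennreal
    have hKr : (0:ℝ) < (K:ℝ) := by exact_mod_cast hK1
    have hLr : (0:ℝ) < (L:ℝ) := by exact_mod_cast hL1
    have hcoef : ENNReal.ofReal (C/((K:ℝ)*(L:ℝ))) * (K:ℝ≥0∞) * (L:ℝ≥0∞) = ENNReal.ofReal C := by
      rw [show ((K:ℝ≥0∞)) = ENNReal.ofReal (K:ℝ) from (ENNReal.ofReal_natCast K).symm,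
        show ((L:ℝ≥0∞)) = ENNReal.ofReal (L:ℝ) from (ENNReal.ofReal_natCast L).symm,
        ← ENNReal.ofReal_mul (by positivity), ← ENNReal.ofReal_mul (by positivity)]
      congr 1
      field_simp
    have key : eLpNorm (P h : ℝ → ℝ) 1 μ01 ≤ ENNReal.ofReal C * eLpNorm hh 1 μ01 := by
      rw [eLpNorm_congr_ae (hP h), eLpNorm_one_eq_lintegral_enorm,
        eLpNorm_one_eq_lintegral_enorm]
      calc ∫⁻ x, (‖∑ n, g' n x * hh (f n x)‖₊ : ℝ≥0∞) ∂μ01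
          ≤ ∫⁻ x, ∑ n, (‖g' n x‖₊ : ℝ≥0∞) * φ (f n x) ∂μ01 := by
            apply lintegral_mono
            intro x
            calc (‖∑ n, g' n x * hh (f n x)‖₊ : ℝ≥0∞)
                ≤ ∑ n, (‖g' n x * hh (f n x)‖₊ : ℝ≥0∞) := by
                  rw [← ENNReal.coe_finset_sum]
                  exact_mod_cast nnnorm_sum_le Finset.univ (fun n => g' n x * hh (f n x))
              _ = ∑ n, (‖g' n x‖₊ : ℝ≥0∞) * φ (f n x) := by
                  refine Finset.sum_congr rfl fun n _ => ?_
                  rw [nnnorm_mul, ENNReal.coe_mul]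
        _ = ∑ n, ∫⁻ x, (‖g' n x‖₊ : ℝ≥0∞) * φ (f n x) ∂μ01 := by
            refine lintegral_finset_sum _ fun n _ => ?_
            exact ((hgmeas n).nnnorm.coe_nnreal_ennreal).mul (hφm.comp (hfmeas n))
        _ ≤ ∑ n, ENNReal.ofReal (C/((K:ℝ)*(L:ℝ))) *
              ((K:ℝ≥0∞) * ∫⁻ y, (Mset n).indicator φ y ∂volume) := by
            refine Finset.sum_le_sum fun n _ => ?_
            have step1 : ∫⁻ x, (‖g' n x‖₊ : ℝ≥0∞) * φ (f n x) ∂μ01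
                ≤ ENNReal.ofReal (C/((K:ℝ)*(L:ℝ))) *
                  ∫⁻ x, ENNReal.ofReal |approxDeriv (Icc 0 1) (f n) x| * φ (f n x) ∂μ01 := by
              rw [← lintegral_const_mul' _ _ ENNReal.ofReal_ne_top]
              refine lintegral_mono_ae ?_
              filter_upwards [hC n] with x hx
              rw [← mul_assoc, ← enorm_eq_nnnorm, Real.enorm_eq_ofReal_abs, ← ENNReal.ofReal_mul (by positivity)]
              exact mul_le_mul_left (ENNReal.ofReal_le_ofReal hx) _
            exact le_trans step1 (mul_le_mul_right (hMint n φ hφm) _)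
        _ = ENNReal.ofReal (C/((K:ℝ)*(L:ℝ))) * (K:ℝ≥0∞) *
              ∫⁻ y, ∑ n, (Mset n).indicator φ y ∂volume := by
            have hfs : ∫⁻ y, ∑ n, (Mset n).indicator φ y ∂volume
                = ∑ n, ∫⁻ y, (Mset n).indicator φ y ∂volume :=
              lintegral_finset_sum _ fun n _ => hφm.indicator (hMmeas n)
            rw [hfs, ← Finset.mul_sum, ← Finset.mul_sum, mul_assoc]
        _ ≤ ENNReal.ofReal (C/((K:ℝ)*(L:ℝ))) * (K:ℝ≥0∞) *
              ((L:ℝ≥0∞) * ∫⁻ y, (Icc (0:ℝ) 1).indicator φ y ∂volume) := by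
            refine mul_le_mul_right ?_ _
            rw [← lintegral_const_mul' _ _ (ENNReal.natCast_ne_top L)]
            refine lintegral_mono_ae ?_
            filter_upwards [mult_bound hL Mset hMsub] with y hy
            by_cases hyI : y ∈ Icc (0:ℝ) 1
            · have hterm : ∀ n : Fin N, (Mset n).indicator φ y
                  = (Mset n).indicator (fun _ => (1:ℝ≥0∞)) y * φ y := by
                intro n
                by_cases hm : y ∈ Mset n
                · rw [Set.indicator_of_mem hm, Set.indicator_of_mem hm, one_mul]
                · rw [Set.indicator_of_notMem hm, Set.indicator_of_notMem hm, zero_mul]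
              calc ∑ n, (Mset n).indicator φ y
                  = (∑ n, (Mset n).indicator (fun _ => (1:ℝ≥0∞)) y) * φ y := by
                    rw [Finset.sum_congr rfl fun n _ => hterm n, ← Finset.sum_mul]
                _ ≤ (L:ℝ≥0∞) * φ y := mul_le_mul_left hy _
                _ = (L:ℝ≥0∞) * (Icc (0:ℝ) 1).indicator φ y := by
                    rw [Set.indicator_of_mem hyI]
            · have hz : ∀ n : Fin N, (Mset n).indicator φ y = 0 := fun n =>
                Set.indicator_of_notMem
                  (fun hm => hyI ((hmaps n).image_subset (hMsub n hm))) _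
              rw [Finset.sum_congr rfl fun n _ => hz n, Finset.sum_const, smul_zero]
              exact zero_le
        _ = ENNReal.ofReal C * ∫⁻ x, φ x ∂μ01 := by
            rw [lintegral_indicator measurableSet_Icc, ← mul_assoc, hcoef]
    have hfin : eLpNorm hh 1 μ01 ≠ ⊤ := Lp.eLpNorm_ne_top h
    rw [Lp.norm_def, Lp.norm_def]
    calc (eLpNorm (↑(P h) : ℝ → ℝ) 1 μ01).toReal
        ≤ (ENNReal.ofReal C * eLpNorm hh 1 μ01).toReal :=
          ENNReal.toReal_mono (ENNReal.mul_ne_top ENNReal.ofReal_ne_top hfin) key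
      _ = C * (eLpNorm hh 1 μ01).toReal := by
          rw [ENNReal.toReal_mul, ENNReal.toReal_ofReal hC0]
  -- powers of the operator
  have hCpow : ∀ (k : ℕ) (u : Lp ℝ 1 μ01), ‖(P ^ k) u‖ ≤ C ^ k * ‖u‖ := by
    intro k
    induction k with
    | zero => intro u; simp
    | succ n ih =>
      intro u
      rw [pow_succ, ContinuousLinearMap.mul_apply]
      calc ‖(P ^ n) (P u)‖ ≤ C ^ n * ‖P u‖ := ih (P u)
        _ ≤ C ^ n * (C * ‖u‖) :=
            mul_le_mul_of_nonneg_left (hPle u) (pow_nonneg hC0 n)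
        _ = C ^ (n+1) * ‖u‖ := by ring
  have hsummable : Summable (fun k => (P ^ k) g) := by
    refine Summable.of_norm_bounded
      ((summable_geometric_of_lt_one hC0 hC1).mul_right _) (fun k => hCpow k g)
  set φ₀ := ∑' k, (P ^ k) g with hφ₀
  have hhs := hsummable.hasSum
  have hfix : φ₀ = P φ₀ + g := by
    have hPφ : P φ₀ = ∑' k, (P ^ (k+1)) g := by
      rw [hφ₀, ContinuousLinearMap.map_tsum P hsummable]
      refine tsum_congr fun k => ?_
      rw [pow_succ', ContinuousLinearMap.mul_apply]
    calc φ₀ = (P ^ 0) g + ∑' k, (P ^ (k+1)) g := by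
          rw [hφ₀]; exact hsummable.tsum_eq_zero_add
      _ = ∑' k, (P ^ (k+1)) g + g := by
          rw [pow_zero, ContinuousLinearMap.one_apply, add_comm]
      _ = P φ₀ + g := by rw [hPφ]
  refine ⟨φ₀, ?_, hfix, ?_, ?_⟩
  · have h1 := hhs.tendsto_sum_nat
    have h2 := h1.comp (tendsto_add_atTop_nat 1)
    exact h2
  · intro φ hφeq
    have hsub : φ - φ₀ = P (φ - φ₀) := by
      rw [map_sub]
      conv_lhs => rw [hφeq, hfix]
      abel
    have hn : ‖φ - φ₀‖ ≤ C * ‖φ - φ₀‖ := by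
      conv_lhs => rw [hsub]
      exact hPle _
    have h0 : ‖φ - φ₀‖ = 0 := by nlinarith [norm_nonneg (φ - φ₀)]
    have := norm_eq_zero.mp h0
    rwa [sub_eq_zero] at this
  · intro m
    have htail := hsummable.sum_add_tsum_nat_add (m+1)
    have hdiff : φ₀ - ∑ k ∈ Finset.range (m+1), (P ^ k) g = ∑' k, (P ^ (k + (m+1))) g := by
      rw [hφ₀, ← htail]; abel
    rw [hdiff]
    have hgeo : Summable fun k : ℕ => C ^ (k + (m+1)) * ‖g‖ :=
      (summable_nat_add_iff (m+1)).mpr ((summable_geometric_of_lt_one hC0 hC1).mul_right _)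
    have hnorms : Summable fun k => ‖(P ^ (k + (m+1))) g‖ :=
      Summable.of_nonneg_of_le (fun k => norm_nonneg _) (fun k => hCpow _ g) hgeo
    calc ‖∑' k, (P ^ (k + (m+1))) g‖
        ≤ ∑' k, ‖(P ^ (k + (m+1))) g‖ := norm_tsum_le_tsum_norm hnorms
      _ ≤ ∑' k, C ^ (k + (m+1)) * ‖g‖ := Summable.tsum_le_tsum (fun k => hCpow _ g) hnorms hgeo
      _ = C ^ (m + 1) / (1 - C) * ‖g‖ := by
          have hcongr : ∀ k : ℕ, C ^ (k + (m+1)) * ‖g‖ = (C ^ (m+1) * ‖g‖) * C ^ k :=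
            fun k => by rw [pow_add]; ring
          rw [tsum_congr hcongr, tsum_mul_left, tsum_geometric_of_lt_one hC0 hC1]
          field_simp
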